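/- Let δ > 0 and let S ⊆ ℝ³ be a set with the δ-cone property. Then for every t ∈ ℝ the slice S ∩ {x₃ = t} consists of exactly one point S_t, and the map t ↦ S_t is a Lipschitz parameterization of S satisfying |t₂ − t₁| ≤ ‖S_{t₂} − S_{t₁}‖ ≤ √(1 + δ⁻²) · |t₂ − t₁| for all t₁, t₂ ∈ ℝ. -/

import Mathlib

open Metric Set

noncomputable section

/-- The double cone `C_δ(z)` with vertex `z`, axis parallel to the `x₃`-axis. -/
def cone (δ : ℝ) (z : EuclideanSpace ℝ (Fin 3)) : Set (EuclideanSpace ℝ (Fin 3)) :=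
  {x | δ ^ 2 * ((x 0 - z 0) ^ 2 + (x 1 - z 1) ^ 2) ≤ (x 2 - z 2) ^ 2}

/-- A set `S ⊆ ℝ³` has the `δ`-cone property: `S` is closed and nonempty, is contained in
`C_δ(z)` for each of its points `z`, and each height in `x₃(S)` is accumulated from
above and below. -/
def ConeProperty (δ : ℝ) (S : Set (EuclideanSpace ℝ (Fin 3))) : Prop :=
  IsClosed S ∧ S.Nonempty ∧
    (∀ z ∈ S, S ⊆ cone δ z) ∧
    (∀ t : ℝ, (∃ x ∈ S, x 2 = t) → ∀ ε > 0,
      (∃ x ∈ S, t < x 2 ∧ x 2 < t + ε) ∧ (∃ x ∈ S, t - ε < x 2 ∧ x 2 < t))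

lemma normsq3 (x z : EuclideanSpace ℝ (Fin 3)) :
    ‖x - z‖ ^ 2 = (x 0 - z 0) ^ 2 + (x 1 - z 1) ^ 2 + (x 2 - z 2) ^ 2 := by
  rw [EuclideanSpace.norm_eq, Real.sq_sqrt (by positivity)]
  simp [Fin.sum_univ_three, Real.norm_eq_abs, sq_abs]

lemma lower3 (x z : EuclideanSpace ℝ (Fin 3)) : |x 2 - z 2| ≤ ‖x - z‖ := by
  have h := normsq3 x z
  calc |x 2 - z 2| = Real.sqrt ((x 2 - z 2) ^ 2) := (Real.sqrt_sq_eq_abs _).symm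
    _ ≤ Real.sqrt (‖x - z‖ ^ 2) := Real.sqrt_le_sqrt (by nlinarith [sq_nonneg (x 0 - z 0), sq_nonneg (x 1 - z 1)])
    _ = ‖x - z‖ := Real.sqrt_sq (norm_nonneg _)

lemma upper3 {δ : ℝ} (hδ : 0 < δ) (x z : EuclideanSpace ℝ (Fin 3)) (h : x ∈ cone δ z) :
    ‖x - z‖ ≤ Real.sqrt (1 + δ⁻¹ ^ 2) * |x 2 - z 2| := by
  have hδ2 : (0:ℝ) < δ ^ 2 := by positivity
  simp only [cone, mem_setOf_eq] at h
  have h2 : (x 0 - z 0) ^ 2 + (x 1 - z 1) ^ 2 ≤ δ⁻¹ ^ 2 * (x 2 - z 2) ^ 2 := by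
    have h1 : (δ ^ 2)⁻¹ * (δ ^ 2 * ((x 0 - z 0) ^ 2 + (x 1 - z 1) ^ 2))
        ≤ (δ ^ 2)⁻¹ * (x 2 - z 2) ^ 2 :=
      mul_le_mul_of_nonneg_left h (by positivity)
    rw [← mul_assoc, inv_mul_cancel₀ hδ2.ne', one_mul] at h1
    simpa [inv_pow] using h1
  calc ‖x - z‖ = Real.sqrt (‖x - z‖ ^ 2) := (Real.sqrt_sq (norm_nonneg _)).symm
    _ ≤ Real.sqrt ((1 + δ⁻¹ ^ 2) * (x 2 - z 2) ^ 2) := by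
        apply Real.sqrt_le_sqrt
        rw [normsq3]
        nlinarith
    _ = Real.sqrt (1 + δ⁻¹ ^ 2) * |x 2 - z 2| := by
        rw [Real.sqrt_mul (by positivity), Real.sqrt_sq_eq_abs]

lemma cont_eval2 : Continuous fun x : EuclideanSpace ℝ (Fin 3) => x 2 :=
  (EuclideanSpace.proj (2 : Fin 3) : EuclideanSpace ℝ (Fin 3) →L[ℝ] ℝ).continuous

lemma exists_slice {δ : ℝ} (hδ : 0 < δ) {S : Set (EuclideanSpace ℝ (Fin 3))}
    (hS : ConeProperty δ S) (t : ℝ) : ∃ x, x ∈ S ∧ x 2 = t := by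
  obtain ⟨hcl, ⟨z0, hz0⟩, hcone, hacc⟩ := hS
  rcases le_total (z0 2) t with ht | ht
  · -- go up from z0
    set K := S ∩ {x | x 2 ∈ Icc (z0 2) t} with hKdef
    have hKcl : IsClosed K := hcl.inter (isClosed_Icc.preimage cont_eval2)
    have hKsub : K ⊆ closedBall z0 (Real.sqrt (1 + δ⁻¹ ^ 2) * (t - z0 2)) := by
      intro x hx
      rw [mem_closedBall, dist_eq_norm]
      calc ‖x - z0‖ ≤ Real.sqrt (1 + δ⁻¹ ^ 2) * |x 2 - z0 2| :=
            upper3 hδ x z0 (hcone z0 hz0 hx.1)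
        _ ≤ Real.sqrt (1 + δ⁻¹ ^ 2) * (t - z0 2) := by
            apply mul_le_mul_of_nonneg_left _ (Real.sqrt_nonneg _)
            have h1 := hx.2.1
            have h2 := hx.2.2
            rw [abs_of_nonneg (by linarith)]
            linarith
    have hK : IsCompact K :=
      Metric.isCompact_of_isClosed_isBounded hKcl ((isBounded_closedBall).subset hKsub)
    have hAcomp : IsCompact ((fun x : EuclideanSpace ℝ (Fin 3) => x 2) '' K) :=
      hK.image cont_eval2
    have hAne : ((fun x : EuclideanSpace ℝ (Fin 3) => x 2) '' K).Nonempty :=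
      ⟨z0 2, z0, ⟨hz0, ⟨le_refl _, ht⟩⟩, rfl⟩
    obtain ⟨y, hyK, hys⟩ := hAcomp.sSup_mem hAne
    have hyt : y 2 ≤ t := hyK.2.2
    rcases eq_or_lt_of_le hyt with heq | hlt
    · exact ⟨y, hyK.1, heq⟩
    · exfalso
      obtain ⟨x, hxS, h1, h2⟩ := (hacc (y 2) ⟨y, hyK.1, rfl⟩ (t - y 2) (by linarith)).1
      have hxK : x ∈ K := ⟨hxS, ⟨le_trans hyK.2.1 h1.le, by linarith⟩⟩
      have := le_csSup hAcomp.bddAbove ⟨x, hxK, rfl⟩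
      rw [← hys] at this
      linarith
  · -- go down from z0
    set K := S ∩ {x | x 2 ∈ Icc t (z0 2)} with hKdef
    have hKcl : IsClosed K := hcl.inter (isClosed_Icc.preimage cont_eval2)
    have hKsub : K ⊆ closedBall z0 (Real.sqrt (1 + δ⁻¹ ^ 2) * (z0 2 - t)) := by
      intro x hx
      rw [mem_closedBall, dist_eq_norm]
      calc ‖x - z0‖ ≤ Real.sqrt (1 + δ⁻¹ ^ 2) * |x 2 - z0 2| :=
            upper3 hδ x z0 (hcone z0 hz0 hx.1)
        _ ≤ Real.sqrt (1 + δ⁻¹ ^ 2) * (z0 2 - t) := by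
            apply mul_le_mul_of_nonneg_left _ (Real.sqrt_nonneg _)
            have h1 := hx.2.1
            have h2 := hx.2.2
            rw [abs_of_nonpos (by linarith)]
            linarith
    have hK : IsCompact K :=
      Metric.isCompact_of_isClosed_isBounded hKcl ((isBounded_closedBall).subset hKsub)
    have hAcomp : IsCompact ((fun x : EuclideanSpace ℝ (Fin 3) => x 2) '' K) :=
      hK.image cont_eval2
    have hAne : ((fun x : EuclideanSpace ℝ (Fin 3) => x 2) '' K).Nonempty :=
      ⟨z0 2, z0, ⟨hz0, ⟨ht, le_refl _⟩⟩, rfl⟩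
    obtain ⟨y, hyK, hys⟩ := hAcomp.sInf_mem hAne
    have hyt : t ≤ y 2 := hyK.2.1
    rcases eq_or_lt_of_le hyt with heq | hlt
    · exact ⟨y, hyK.1, heq.symm⟩
    · exfalso
      obtain ⟨x, hxS, h1, h2⟩ := (hacc (y 2) ⟨y, hyK.1, rfl⟩ (y 2 - t) (by linarith)).2
      have hxK : x ∈ K := ⟨hxS, ⟨by linarith, le_trans h2.le hyK.2.2⟩⟩
      have := csInf_le hAcomp.bddBelow ⟨x, hxK, rfl⟩
      rw [← hys] at this
      linarith

/-- Lemma 5.2: if `S` has the `δ`-cone property, then each horizontal slice of `S` is exactly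
one point `S_t`, and `t ↦ S_t` is a Lipschitz parameterization of `S` with
`|t₂ - t₁| ≤ ‖S_{t₂} - S_{t₁}‖ ≤ √(1 + δ⁻²) |t₂ - t₁|`. -/
theorem stmt0 (δ : ℝ) (hδ : 0 < δ) (S : Set (EuclideanSpace ℝ (Fin 3)))
    (hS : ConeProperty δ S) :
    ∃ f : ℝ → EuclideanSpace ℝ (Fin 3),
      (∀ t : ℝ, S ∩ {x | x 2 = t} = {f t}) ∧
      (∀ t₁ t₂ : ℝ,
        |t₂ - t₁| ≤ ‖f t₂ - f t₁‖ ∧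
        ‖f t₂ - f t₁‖ ≤ Real.sqrt (1 + δ⁻¹ ^ 2) * |t₂ - t₁|) := by
  have huniq : ∀ x ∈ S, ∀ y ∈ S, x 2 = y 2 → x = y := by
    intro x hx y hy h
    have hc := hS.2.2.1 y hy hx
    simp only [cone, mem_setOf_eq] at hc
    have hδ2 : (0:ℝ) < δ ^ 2 := by positivity
    have h2 : x 2 - y 2 = 0 := by rw [h]; ring
    rw [h2] at hc
    have ha : (x 0 - y 0) ^ 2 = 0 := by nlinarith [sq_nonneg (x 1 - y 1)]
    have hb : (x 1 - y 1) ^ 2 = 0 := by nlinarith [sq_nonneg (x 0 - y 0)]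
    have h0 : x 0 = y 0 := by have := sq_eq_zero_iff.mp ha; linarith
    have h1 : x 1 = y 1 := by have := sq_eq_zero_iff.mp hb; linarith
    ext i
    fin_cases i <;> assumption
  choose f hf1 hf2 using fun t => exists_slice hδ hS t
  refine ⟨f, ?_, ?_⟩
  · intro t
    ext y
    simp only [mem_inter_iff, mem_setOf_eq, mem_singleton_iff]
    constructor
    · rintro ⟨hyS, hyt⟩
      exact huniq y hyS (f t) (hf1 t) (by rw [hyt, hf2 t])
    · rintro rfl
      exact ⟨hf1 t, hf2 t⟩
  · intro t₁ t₂
    have hc : f t₂ ∈ cone δ (f t₁) := hS.2.2.1 (f t₁) (hf1 t₁) (hf1 t₂)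
    have h22 : f t₂ 2 - f t₁ 2 = t₂ - t₁ := by rw [hf2, hf2]
    constructor
    · have h := lower3 (f t₂) (f t₁)
      rwa [h22] at h
    · have h := upper3 hδ (f t₂) (f t₁) hc
      rwa [h22] at h
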